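/- For any N ≥ 0 and words w₁ ∈ 𝔥¹, w₂ a product of elements z_m = yx^{m-1}, w₃ ∈ 𝔥, one has yᴺ * (w₁w₂w₃) = Σ_{N₁+N₂=N}(yᴺ¹*w₁)w₂(yᴺ²*w₃) + Σ_{N₁+1+N₂=N}(yᴺ¹*w₁)w₂x(yᴺ²*w₃). -/

import Mathlib

open scoped BigOperators

abbrev Ltr := Fin 2

/-- `𝔥 = ℚ⟨x,y⟩`, realized as the monoid algebra of the free monoid on two letters. -/
abbrev H := MonoidAlgebra ℚ (FreeMonoid Ltr)

/-- The word `u₁⋯u_m` as an element of `𝔥`. -/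
noncomputable def wrd (l : List Ltr) : H := MonoidAlgebra.of ℚ (FreeMonoid Ltr) (FreeMonoid.ofList l)

/-- The generator `x`. -/
noncomputable def Xh : H := wrd [0]
/-- The generator `y`. -/
noncomputable def Yh : H := wrd [1]

/-- Letter produced when stuffling letters `u, v`: `y` iff both are `y`, else `x`. -/
noncomputable def ellt (a b : Ltr) : H := if a = 1 ∧ b = 1 then Yh else Xh
def cc1 (a b : Ltr) : ℚ := if a = 1 ∧ b = 0 then -1 else 1
def cc2 (a b : Ltr) : ℚ := if a = 0 ∧ b = 1 then -1 else 1
def cc3 (a b : Ltr) : ℚ := if a = 0 ∧ b = 0 then -1 else 1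

/-- The harmonic (stuffle) product on words of `𝔥`: on `𝔥¹` it is Hoffman's harmonic
product defined by `w*1 = 1*w = w` and
`z_k w₁ * z_l w₂ = z_k(w₁ * z_l w₂) + z_l(z_k w₁ * w₂) + z_{k+l}(w₁ * w₂)` with
`z_n = yx^{n-1}`, extended to all of `𝔥` (compatibly, via `w₁e₁ ⊛̃ w₂e₁ = (w₁*w₂)e₁`). -/
noncomputable def starW : List Ltr → List Ltr → H
  | [], v => wrd v
  | u, [] => wrd u
  | a :: u, b :: v =>
      cc1 a b • (ellt a b * starW u (b :: v)) + cc2 a b • (ellt a b * starW (a :: u) v)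
      + cc3 a b • (ellt a b * Xh * starW u v)
termination_by u v => u.length + v.length

/-- The harmonic product `*` on `𝔥`, extended bilinearly. -/
noncomputable def star (f g : H) : H :=
  f.coeff.sum fun u cu => g.coeff.sum fun v cv => (cu * cv) • starW u.toList v.toList

abbrev PS := PowerSeries H

/-- The harmonic product `*` extended coefficientwise to `𝔥[[T]]` (resp. `𝔥[[A]]`). -/
noncomputable def starPS (f g : PS) : PS :=
  PowerSeries.mk fun n =>
    ∑ p ∈ Finset.HasAntidiagonal.antidiagonal n,
      star (PowerSeries.coeff p.1 f) (PowerSeries.coeff p.2 g)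

/-- Membership in `𝔥¹ = ℚ ⊕ y𝔥`: every word of the support is empty or starts with `y`. -/
def inH1 (f : H) : Prop :=
  ∀ l ∈ f.coeff.support, FreeMonoid.toList l = [] ∨ (FreeMonoid.toList l).head? = some 1


lemma starW_nil_left (v : List Ltr) : starW [] v = wrd v := by rw [starW]
lemma starW_nil_right (u : List Ltr) : starW u [] = wrd u := by
  cases u with
  | nil => rw [starW]
  | cons a u => rw [starW]; simp
lemma starW_cons_cons (a b : Ltr) (u v : List Ltr) : starW (a::u) (b::v) =
    cc1 a b • (ellt a b * starW u (b :: v)) + cc2 a b • (ellt a b * starW (a :: u) v)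
      + cc3 a b • (ellt a b * Xh * starW u v) := by rw [starW]
lemma wrd_append (l1 l2 : List Ltr) : wrd (l1 ++ l2) = wrd l1 * wrd l2 := by
  simp [wrd, ← map_mul]
lemma wrd_cons (a : Ltr) (l : List Ltr) : wrd (a::l) = wrd [a] * wrd l := wrd_append [a] l
lemma wrd_nil : wrd [] = 1 := rfl

lemma cc1_11 : cc1 1 1 = 1 := by simp [cc1]
lemma cc2_11 : cc2 1 1 = 1 := by simp [cc2]
lemma cc3_11 : cc3 1 1 = 1 := by simp [cc3]
lemma ellt_11 : ellt 1 1 = Yh := by simp [ellt]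
lemma cc1_10 : cc1 1 0 = -1 := by simp [cc1]
lemma cc2_10 : cc2 1 0 = 1 := by simp [cc2]
lemma cc3_10 : cc3 1 0 = 1 := by simp [cc3]
lemma ellt_10 : ellt 1 0 = Xh := by simp [ellt]

lemma lemX : ∀ N (v : List Ltr),
    starW (List.replicate N 1) ((0:Ltr)::v) = Xh * starW (List.replicate N 1) v := by
  intro N
  induction N with
  | zero =>
      intro v
      simp only [List.replicate_zero, starW_nil_left]
      rw [wrd_cons]; rfl
  | succ N ih =>
      intro v
      rw [List.replicate_succ, starW_cons_cons, cc1_10, cc2_10, cc3_10, ellt_10,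
        ← List.replicate_succ, ih]
      simp only [neg_smul, one_smul]
      noncomm_ring

lemma lemXk : ∀ k N (t : List Ltr),
    starW (List.replicate N 1) (List.replicate k 0 ++ t)
      = wrd (List.replicate k 0) * starW (List.replicate N 1) t := by
  intro k
  induction k with
  | zero => intro N t; simp [wrd_nil]
  | succ k ih =>
      intro N t
      rw [List.replicate_succ, List.cons_append, lemX, ih, wrd_cons]
      show _ = wrd [0] * wrd _ * _
      rw [mul_assoc]
      rfl

lemma Xpow_comm (k : ℕ) : wrd (List.replicate k 0) * Xh = Xh * wrd (List.replicate k 0) := by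
  show wrd _ * wrd [0] = wrd [0] * wrd _
  rw [← wrd_append, ← wrd_append]
  congr 1
  rw [List.singleton_append, ← List.replicate_succ, ← List.replicate_succ']

lemma repl_succ_mul (p1 : ℕ) (B : H) :
    wrd (List.replicate (p1+1) 1) * B = Yh * (wrd (List.replicate p1 1) * B) := by
  rw [List.replicate_succ, wrd_cons, mul_assoc]; rfl

/-- First-type sum. -/
noncomputable def AA (k N : ℕ) (u t : List Ltr) : H :=
  ∑ p ∈ Finset.HasAntidiagonal.antidiagonal N,
    starW (List.replicate p.1 1) u * wrd (1 :: List.replicate k 0) * starW (List.replicate p.2 1) t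

/-- Second-type sum. -/
noncomputable def BB (k N : ℕ) (u t : List Ltr) : H :=
  ∑ p ∈ Finset.HasAntidiagonal.antidiagonal N,
    starW (List.replicate p.1 1) u * wrd (1 :: List.replicate k 0) * Xh * starW (List.replicate p.2 1) t

lemma AA_zero (k : ℕ) (u t : List Ltr) :
    AA k 0 u t = wrd u * wrd (1 :: List.replicate k 0) * wrd t := by
  simp [AA, Finset.Nat.antidiagonal_zero, starW_nil_left, starW_nil_right]

lemma AA_cons_zero (k N : ℕ) (u t : List Ltr) :
    AA k N ((0:Ltr)::u) t = Xh * AA k N u t := by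
  rw [AA, AA, Finset.mul_sum]
  refine Finset.sum_congr rfl fun p _ => ?_
  rw [lemX, mul_assoc, mul_assoc, mul_assoc]

lemma BB_cons_zero (k N : ℕ) (u t : List Ltr) :
    BB k N ((0:Ltr)::u) t = Xh * BB k N u t := by
  rw [BB, BB, Finset.mul_sum]
  refine Finset.sum_congr rfl fun p _ => ?_
  rw [lemX, mul_assoc, mul_assoc, mul_assoc, mul_assoc, mul_assoc]

lemma AA_succ_nil (k N : ℕ) (t : List Ltr) :
    AA k (N+1) [] t
      = wrd (1 :: List.replicate k 0) * starW (List.replicate (N+1) 1) t + Yh * AA k N [] t := by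
  rw [AA, AA, Finset.Nat.sum_antidiagonal_succ, Finset.mul_sum]
  simp only [starW_nil_right, List.replicate_zero, wrd_nil, one_mul]
  congr 1
  refine Finset.sum_congr rfl fun p _ => ?_
  rw [mul_assoc, repl_succ_mul, mul_assoc]

lemma BB_nil (k N : ℕ) (t : List Ltr) :
    BB k N [] t
      = wrd (1 :: List.replicate k 0) * Xh * starW (List.replicate N 1) t
        + Yh * (if N = 0 then 0 else BB k (N-1) [] t) := by
  cases N with
  | zero =>
      simp [BB, Finset.Nat.antidiagonal_zero, starW_nil_right, wrd_nil]
  | succ N =>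
      rw [BB, Finset.Nat.sum_antidiagonal_succ]
      simp only [Nat.succ_ne_zero, if_false, Nat.succ_sub_one]
      rw [BB, Finset.mul_sum]
      simp only [starW_nil_right, List.replicate_zero, wrd_nil, one_mul]
      congr 1
      refine Finset.sum_congr rfl fun p _ => ?_
      rw [mul_assoc, mul_assoc, repl_succ_mul, mul_assoc, mul_assoc]

lemma starW_repl_succ_cons_one (p1 : ℕ) (u : List Ltr) :
    starW (List.replicate (p1+1) 1) ((1:Ltr)::u)
      = Yh * starW (List.replicate p1 1) ((1:Ltr)::u) + Yh * starW (List.replicate (p1+1) 1) u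
        + Yh * Xh * starW (List.replicate p1 1) u := by
  rw [List.replicate_succ, starW_cons_cons, cc1_11, cc2_11, cc3_11, ellt_11]
  simp only [one_smul]

lemma wrd_one_cons (u : List Ltr) (A : H) :
    wrd ((1:Ltr)::u) * A = Yh * (wrd u * A) := by
  rw [wrd_cons, mul_assoc]; rfl

lemma AA_succ_cons_one (k N : ℕ) (u t : List Ltr) :
    AA k (N+1) ((1:Ltr)::u) t
      = Yh * AA k N ((1:Ltr)::u) t + Yh * AA k (N+1) u t + Yh * Xh * AA k N u t := by
  simp only [AA]
  rw [Finset.Nat.sum_antidiagonal_succ, Finset.Nat.sum_antidiagonal_succ]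
  simp only [starW_repl_succ_cons_one, add_mul, Finset.sum_add_distrib, Finset.mul_sum,
    List.replicate_zero, starW_nil_left, mul_assoc, mul_add]
  rw [wrd_cons, mul_assoc]
  have hY : wrd [(1:Ltr)] = Yh := rfl
  rw [hY]
  abel

lemma BB_cons_one (k N : ℕ) (u t : List Ltr) :
    BB k N ((1:Ltr)::u) t
      = Yh * (if N = 0 then 0 else BB k (N-1) ((1:Ltr)::u) t)
        + Yh * BB k N u t + Yh * Xh * (if N = 0 then 0 else BB k (N-1) u t) := by
  cases N with
  | zero =>
      rw [if_pos rfl, if_pos rfl, mul_zero, mul_zero, zero_add, add_zero]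
      simp only [BB, Finset.Nat.antidiagonal_zero, Finset.sum_singleton, List.replicate_zero,
        starW_nil_left, Finset.mul_sum, mul_assoc]
      rw [wrd_cons, mul_assoc]
      rfl
  | succ N =>
      simp only [Nat.succ_ne_zero, if_false, Nat.succ_sub_one]
      simp only [BB]
      rw [Finset.Nat.sum_antidiagonal_succ, Finset.Nat.sum_antidiagonal_succ]
      simp only [starW_repl_succ_cons_one, add_mul, Finset.sum_add_distrib, Finset.mul_sum,
        List.replicate_zero, starW_nil_left, mul_assoc, mul_add]
      rw [wrd_cons, mul_assoc]
      have hY : wrd [(1:Ltr)] = Yh := rfl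
      rw [hY]
      abel

lemma key (k : ℕ) : ∀ n N (u t : List Ltr), N + u.length ≤ n →
    starW (List.replicate N 1) (u ++ (1 :: List.replicate k 0) ++ t)
      = AA k N u t + (if N = 0 then 0 else BB k (N-1) u t) := by
  intro n
  induction n with
  | zero =>
      intro N u t h
      have hN : N = 0 := by omega
      subst hN
      rw [if_pos rfl, add_zero, AA_zero]
      simp only [List.replicate_zero, starW_nil_left, wrd_append]
  | succ n ih =>
      intro N u t h
      cases N with
      | zero =>
          rw [if_pos rfl, add_zero, AA_zero]
          simp only [List.replicate_zero, starW_nil_left, wrd_append]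
      | succ N =>
          rw [if_neg (Nat.succ_ne_zero N), Nat.succ_sub_one]
          cases u with
          | nil =>
              have hl : ([] : List Ltr) ++ (1 :: List.replicate k 0) ++ t
                  = (1:Ltr) :: (List.replicate k 0 ++ t) := by simp
              rw [hl, List.replicate_succ, starW_cons_cons, cc1_11, cc2_11, cc3_11, ellt_11]
              simp only [one_smul]
              rw [← List.replicate_succ]
              rw [show (1:Ltr) :: (List.replicate k 0 ++ t)
                    = ([] : List Ltr) ++ (1 :: List.replicate k 0) ++ t from (by simp)]
              rw [ih N [] t (by simp only [List.length_nil]; omega), lemXk, lemXk]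
              have h1 : ∀ A : H, wrd ((1:Ltr) :: List.replicate k 0) * A
                  = Yh * (wrd (List.replicate k 0) * A) := fun A => wrd_one_cons _ A
              have h2 : ∀ A : H, wrd ((1:Ltr) :: List.replicate k 0) * Xh * A
                  = Yh * Xh * (wrd (List.replicate k 0) * A) := by
                intro A
                rw [wrd_cons, mul_assoc (wrd [1]), Xpow_comm, ← mul_assoc (wrd [(1:Ltr)]),
                  mul_assoc ((wrd [(1:Ltr)]) * Xh)]
                rfl
              conv_rhs => rw [AA_succ_nil, BB_nil, h2, h1]
              simp only [mul_add, mul_assoc]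
              abel
          | cons a u =>
              have ha : a = 0 ∨ a = 1 := by fin_cases a <;> simp
              rcases ha with ha | ha <;> subst ha
              · rw [List.cons_append, List.cons_append, lemX,
                  ih (N+1) u t (by simp only [List.length_cons] at h; omega)]
                rw [if_neg (Nat.succ_ne_zero N), Nat.succ_sub_one]
                conv_rhs => rw [AA_cons_zero, BB_cons_zero]
                rw [mul_add]
              · rw [List.cons_append, List.cons_append, List.replicate_succ, starW_cons_cons,
                  cc1_11, cc2_11, cc3_11, ellt_11]
                simp only [one_smul]
                rw [← List.replicate_succ]
                rw [show (1:Ltr) :: (u ++ (1 :: List.replicate k 0) ++ t)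
                      = ((1:Ltr) :: u) ++ (1 :: List.replicate k 0) ++ t from (by simp)]
                rw [ih N ((1:Ltr)::u) t (by simp only [List.length_cons] at h ⊢; omega),
                  ih (N+1) u t (by simp only [List.length_cons] at h; omega),
                  ih N u t (by simp only [List.length_cons] at h; omega)]
                rw [if_neg (Nat.succ_ne_zero N), Nat.succ_sub_one]
                conv_rhs => rw [AA_succ_cons_one, BB_cons_one]
                simp only [mul_add]
                abel

lemma star_single_single (a b : FreeMonoid Ltr) (c d : ℚ) :
    _root_.star (MonoidAlgebra.single a c) (MonoidAlgebra.single b d)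
      = (c * d) • starW (FreeMonoid.toList a) (FreeMonoid.toList b) := by
  unfold _root_.star
  rw [MonoidAlgebra.coeff_single, MonoidAlgebra.coeff_single,
    Finsupp.sum_single_index (by simp [Finsupp.sum]), Finsupp.sum_single_index (by simp)]

lemma star_zero_right (f : H) : _root_.star f 0 = 0 := by
  simp [_root_.star]

lemma star_add_right (f g g' : H) : _root_.star f (g + g') = _root_.star f g + _root_.star f g' := by
  unfold _root_.star
  rw [MonoidAlgebra.coeff_add, ← Finsupp.sum_add]
  congr 1
  funext u cu
  exact Finsupp.sum_add_index' (by simp) (by intro v b1 b2; simp [mul_add, add_smul])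

lemma wrd_def (l : List Ltr) : wrd l = MonoidAlgebra.single (FreeMonoid.ofList l) 1 := rfl

lemma Xh_pow (j : ℕ) : Xh ^ j = wrd (List.replicate j 0) := by
  induction j with
  | zero => rw [pow_zero, List.replicate_zero, wrd_nil]
  | succ j ih =>
      rw [pow_succ', ih, List.replicate_succ, wrd_cons]
      rfl

lemma Yh_pow (N : ℕ) : Yh ^ N = wrd (List.replicate N 1) := by
  induction N with
  | zero => rw [pow_zero, List.replicate_zero, wrd_nil]
  | succ N ih =>
      rw [pow_succ', ih, List.replicate_succ, wrd_cons]
      rfl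

lemma YXpow (j : ℕ) : Yh * Xh ^ j = wrd ((1:Ltr) :: List.replicate j 0) := by
  rw [Xh_pow, wrd_cons]
  rfl

lemma star_Ypow_single (N : ℕ) (w : FreeMonoid Ltr) (e : ℚ) :
    _root_.star (Yh ^ N) (MonoidAlgebra.single w e)
      = e • starW (List.replicate N 1) (FreeMonoid.toList w) := by
  rw [Yh_pow, wrd_def, star_single_single, FreeMonoid.toList_ofList, one_mul]

lemma star_finsupp_add (f : H) (g g' : H) :
    _root_.star f (g + g' : H) = _root_.star f g + _root_.star f g' :=
  star_add_right f g g'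

lemma core (N k : ℕ) (a b : FreeMonoid Ltr) (c d : ℚ) :
    _root_.star (Yh ^ N)
        (MonoidAlgebra.single a c * wrd ((1:Ltr) :: List.replicate k 0) * MonoidAlgebra.single b d)
      = (∑ p ∈ Finset.HasAntidiagonal.antidiagonal N,
          _root_.star (Yh ^ p.1) (MonoidAlgebra.single a c) * wrd ((1:Ltr) :: List.replicate k 0)
            * _root_.star (Yh ^ p.2) (MonoidAlgebra.single b d))
        + (if N = 0 then 0 else
            ∑ p ∈ Finset.HasAntidiagonal.antidiagonal (N - 1),
              _root_.star (Yh ^ p.1) (MonoidAlgebra.single a c) * wrd ((1:Ltr) :: List.replicate k 0)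
                * Xh * _root_.star (Yh ^ p.2) (MonoidAlgebra.single b d)) := by
  rw [wrd_def, MonoidAlgebra.single_mul_single, MonoidAlgebra.single_mul_single,
    star_Ypow_single]
  simp only [FreeMonoid.toList_mul, FreeMonoid.toList_ofList]
  rw [key k (N + (FreeMonoid.toList a).length) N (FreeMonoid.toList a) (FreeMonoid.toList b)
    (le_refl _)]
  simp only [star_Ypow_single, smul_mul_assoc, mul_smul_comm, smul_smul, AA, BB,
    ← Finset.smul_sum, ← wrd_def]
  rw [smul_add]
  congr 1
  · rw [mul_one, mul_comm c d]
  · split_ifs with hN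
    · rw [smul_zero]
    · rw [mul_one, mul_comm c d]


/-- For `N ≥ 0`, `w₁ ∈ 𝔥¹`, `w₂ = z_m = yx^{m-1}` (`m ≥ 1`), `w₃ ∈ 𝔥`:
`yᴺ * (w₁w₂w₃) = Σ_{N₁+N₂=N}(yᴺ¹*w₁)w₂(yᴺ²*w₃) + Σ_{N₁+1+N₂=N}(yᴺ¹*w₁)w₂x(yᴺ²*w₃)`. -/
theorem stmt15 (N m : ℕ) (hm : 1 ≤ m) (w₁ w₃ : H) (h₁ : inH1 w₁) :
    star (Yh ^ N) (w₁ * (Yh * Xh ^ (m - 1)) * w₃)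
      = (∑ p ∈ Finset.HasAntidiagonal.antidiagonal N,
          star (Yh ^ p.1) w₁ * (Yh * Xh ^ (m - 1)) * star (Yh ^ p.2) w₃)
        + (if N = 0 then 0 else
            ∑ p ∈ Finset.HasAntidiagonal.antidiagonal (N - 1),
              star (Yh ^ p.1) w₁ * (Yh * Xh ^ (m - 1)) * Xh * star (Yh ^ p.2) w₃) := by
  clear h₁ hm
  rw [YXpow]
  induction w₁ using MonoidAlgebra.induction_linear with
  | zero =>
      simp only [zero_mul, star_zero_right, Finset.sum_const_zero, ite_self, add_zero]
  | add f g hf hg =>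
      simp only [add_mul, star_add_right, star_finsupp_add, hf, hg, Finset.sum_add_distrib]
      split_ifs with hN <;> abel
  | single a c =>
      induction w₃ using MonoidAlgebra.induction_linear with
      | zero =>
          simp only [mul_zero, star_zero_right, Finset.sum_const_zero, ite_self, add_zero]
      | add f g hf hg =>
          simp only [mul_add, star_add_right, star_finsupp_add, hf, hg, Finset.sum_add_distrib]
          split_ifs with hN <;> abel
      | single b d =>
          exact core N (m-1) a b c d
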